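/- On a star-shaped open subset U of ℝⁿ, every closed C¹ differential 1-form is exact: if ω = Σᵢ fᵢ dxᵢ with dω = 0, then there exists a C² function h : U → ℝ with ω = dh, i.e., ∂h/∂xᵢ = fᵢ for all i. -/

import Mathlib

open scoped BigOperators
open Metric Set MeasureTheory

set_option maxHeartbeats 1000000
set_option synthInstance.maxHeartbeats 400000

/-- **Poincaré lemma for 1-forms.** On a star-shaped open subset `U` of `ℝⁿ`, every closed
`C¹` 1-form `ω = Σᵢ fᵢ dxᵢ` is exact: there is a `C²` function `h` with `∂h/∂xᵢ = fᵢ` on `U`,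
i.e. `ω = dh`. -/
theorem poincare_lemma_one_forms {n : ℕ} (U : Set (Fin n → ℝ)) (hU : IsOpen U)
    (a : Fin n → ℝ) (ha : a ∈ U) (hstar : ∀ b ∈ U, segment ℝ a b ⊆ U)
    (f : Fin n → (Fin n → ℝ) → ℝ) (hf : ∀ i, ContDiffOn ℝ 1 (f i) U)
    (hclosed : ∀ x ∈ U, ∀ i j,
      fderiv ℝ (f i) x (Pi.single j 1) = fderiv ℝ (f j) x (Pi.single i 1)) :
    ∃ h : (Fin n → ℝ) → ℝ, ContDiffOn ℝ 2 h U ∧ ∀ x ∈ U,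
      HasFDerivAt h
        (∑ i, f i x • (ContinuousLinearMap.proj i : ((j : Fin n) → ℝ) →L[ℝ] ℝ)) x := by
  classical
  have hfc : ∀ i, ContinuousOn (f i) U := fun i => (hf i).continuousOn
  have hdfc : ∀ i, ContinuousOn (fun y => fderiv ℝ (f i) y) U :=
    fun i => (hf i).continuousOn_fderiv_of_isOpen hU le_rfl
  have hdf : ∀ i, ∀ y ∈ U, HasFDerivAt (f i) (fderiv ℝ (f i) y) y := fun i y hy =>
    (((hf i).differentiableOn one_ne_zero).differentiableAt (hU.mem_nhds hy)).hasFDerivAt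
  have hseg : ∀ x ∈ U, ∀ t ∈ Icc (0:ℝ) 1, a + t • (x - a) ∈ U := by
    intro x hx t ht
    apply hstar x hx
    rw [segment_eq_image']
    exact ⟨t, ht, rfl⟩
  have hccont : ∀ x : Fin n → ℝ, Continuous (fun t : ℝ => a + t • (x - a)) := by
    intro x
    exact continuous_const.add (continuous_id.smul continuous_const)
  have hsubI : Set.uIoc (0:ℝ) 1 ⊆ Icc (0:ℝ) 1 := by
    rw [uIoc_of_le zero_le_one]; exact Ioc_subset_Icc_self
  set F : (Fin n → ℝ) → ℝ → ℝ := fun x t => ∑ i, f i (a + t • (x - a)) * (x i - a i) with hFdef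
  have hproj : ∀ i : Fin n,
      ‖(ContinuousLinearMap.proj i : ((j : Fin n) → ℝ) →L[ℝ] ℝ)‖ ≤ 1 := by
    intro i
    refine ContinuousLinearMap.opNorm_le_bound _ zero_le_one fun v => ?_
    simpa using norm_le_pi_norm v i
  have main : ∀ x₀ ∈ U, HasFDerivAt (fun x => ∫ t in (0:ℝ)..1, F x t)
      (∑ i, f i x₀ • (ContinuousLinearMap.proj i : ((j : Fin n) → ℝ) →L[ℝ] ℝ)) x₀ := by
    intro x₀ hx₀
    have hsegc : IsCompact (segment ℝ a x₀) := by
      rw [segment_eq_image']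
      exact isCompact_Icc.image (continuous_const.add (continuous_id.smul continuous_const))
    obtain ⟨δ, δpos, hδ⟩ := hsegc.exists_thickening_subset_open hU (hstar x₀ hx₀)
    set K := cthickening (δ/2) (segment ℝ a x₀) with hKdef
    have hKc : IsCompact K := hsegc.cthickening
    have hKU : K ⊆ U := (cthickening_subset_thickening' δpos (half_lt_self δpos) _).trans hδ
    have hmemK : ∀ x ∈ ball x₀ (δ/2), ∀ t ∈ Icc (0:ℝ) 1, a + t • (x - a) ∈ K := by
      intro x hx t ht
      refine mem_cthickening_of_dist_le _ (a + t • (x₀ - a)) _ _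
        (by rw [segment_eq_image']; exact ⟨t, ht, rfl⟩) ?_
      have hd : (a + t • (x - a)) - (a + t • (x₀ - a)) = t • (x - x₀) := by module
      rw [dist_eq_norm, hd, norm_smul]
      have h1 : ‖x - x₀‖ ≤ δ/2 := by
        have := mem_ball_iff_norm.mp hx
        linarith
      have h2 : |t| ≤ 1 := by rw [abs_le]; exact ⟨by linarith [ht.1], ht.2⟩
      calc |t| * ‖x - x₀‖ ≤ 1 * (δ/2) :=
        mul_le_mul h2 h1 (norm_nonneg _) zero_le_one
      _ = δ/2 := one_mul _
    have hmemU : ∀ x ∈ ball x₀ (δ/2), ∀ t ∈ Icc (0:ℝ) 1, a + t • (x - a) ∈ U :=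
      fun x hx t ht => hKU (hmemK x hx t ht)
    choose M hM using fun i => hKc.exists_bound_of_continuousOn ((hdfc i).mono hKU)
    choose M' hM' using fun i => hKc.exists_bound_of_continuousOn ((hfc i).mono hKU)
    have haK : a ∈ K := self_subset_cthickening _ (left_mem_segment ℝ a x₀)
    have hM0 : ∀ i, 0 ≤ M i := fun i => (norm_nonneg _).trans (hM i a haK)
    have hM'0 : ∀ i, 0 ≤ M' i := fun i => (norm_nonneg _).trans (hM' i a haK)
    set R := ‖x₀ - a‖ + δ/2 with hRdef
    have hR0 : 0 ≤ R := by positivity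
    have hxa : ∀ x ∈ ball x₀ (δ/2), ∀ i, ‖x i - a i‖ ≤ R := by
      intro x hx i
      have h1 : ‖x i - a i‖ ≤ ‖x - a‖ := by
        simpa using norm_le_pi_norm (x - a) i
      have h2 : ‖x - a‖ ≤ ‖x - x₀‖ + ‖x₀ - a‖ := by
        simpa [dist_eq_norm] using dist_triangle x x₀ a
      have h3 : ‖x - x₀‖ < δ/2 := mem_ball_iff_norm.mp hx
      rw [hRdef]; linarith
    set F' : (Fin n → ℝ) → ℝ → ((Fin n → ℝ) →L[ℝ] ℝ) := fun x t =>
      ∑ i, ((f i (a + t • (x - a))) •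
          (ContinuousLinearMap.proj i : ((j : Fin n) → ℝ) →L[ℝ] ℝ)
        + (x i - a i) • (t • fderiv ℝ (f i) (a + t • (x - a)))) with hF'def
    -- differentiability in x
    have h_diff : ∀ t ∈ Set.uIoc (0:ℝ) 1, ∀ x ∈ ball x₀ (δ/2),
        HasFDerivAt (fun x => F x t) (F' x t) x := by
      intro t ht x hx
      have htI : t ∈ Icc (0:ℝ) 1 := hsubI ht
      apply HasFDerivAt.fun_sum
      intro i _
      have hcx : HasFDerivAt (fun x : Fin n → ℝ => a + t • (x - a))
          (t • ContinuousLinearMap.id ℝ (Fin n → ℝ)) x :=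
        (((hasFDerivAt_id x).sub_const a).const_smul t).const_add a
      have hfi := (hdf i _ (hmemU x hx t htI)).comp x hcx
      have hcomp : (fderiv ℝ (f i) (a + t • (x - a))).comp
          (t • ContinuousLinearMap.id ℝ (Fin n → ℝ))
          = t • fderiv ℝ (f i) (a + t • (x - a)) := by
        ext v; simp
      rw [hcomp] at hfi
      have hxi : HasFDerivAt (fun x : Fin n → ℝ => x i - a i)
          (ContinuousLinearMap.proj i : ((j : Fin n) → ℝ) →L[ℝ] ℝ) x :=
        (ContinuousLinearMap.proj i :
          ((j : Fin n) → ℝ) →L[ℝ] ℝ).hasFDerivAt.sub_const (a i)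
      exact hfi.mul hxi
    -- uniform bound
    set C := ∑ i, (M' i + R * M i) with hCdef
    have h_bound : ∀ t ∈ Set.uIoc (0:ℝ) 1, ∀ x ∈ ball x₀ (δ/2), ‖F' x t‖ ≤ C := by
      intro t ht x hx
      have htI : t ∈ Icc (0:ℝ) 1 := hsubI ht
      have ht1 : |t| ≤ 1 := by rw [abs_le]; exact ⟨by linarith [htI.1], htI.2⟩
      have hmem := hmemK x hx t htI
      calc ‖F' x t‖ ≤ ∑ i, ‖(f i (a + t • (x - a))) •
            (ContinuousLinearMap.proj i : ((j : Fin n) → ℝ) →L[ℝ] ℝ)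
          + (x i - a i) • (t • fderiv ℝ (f i) (a + t • (x - a)))‖ := norm_sum_le _ _
        _ ≤ C := by
          rw [hCdef]
          refine Finset.sum_le_sum fun i _ => ?_
          refine (norm_add_le _ _).trans (add_le_add ?_ ?_)
          · refine (norm_smul_le (f i (a + t • (x - a))) (ContinuousLinearMap.proj i :
              ((j : Fin n) → ℝ) →L[ℝ] ℝ)).trans ?_
            calc ‖f i (a + t • (x - a))‖ * ‖(ContinuousLinearMap.proj i :
                  ((j : Fin n) → ℝ) →L[ℝ] ℝ)‖
                ≤ M' i * 1 :=
                  mul_le_mul (hM' i _ hmem) (hproj i) (norm_nonneg _) (hM'0 i)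
              _ = M' i := mul_one _
          · refine (norm_smul_le (x i - a i)
              (t • fderiv ℝ (f i) (a + t • (x - a)))).trans ?_
            have hDt : ‖t • fderiv ℝ (f i) (a + t • (x - a))‖ ≤ M i := by
              refine (norm_smul_le t (fderiv ℝ (f i) (a + t • (x - a)))).trans ?_
              calc ‖t‖ * ‖fderiv ℝ (f i) (a + t • (x - a))‖ ≤ 1 * M i :=
                  mul_le_mul (by simpa [Real.norm_eq_abs] using ht1)
                    (hM i _ hmem) (norm_nonneg _) zero_le_one
                _ = M i := one_mul _
            exact mul_le_mul (hxa x hx i) hDt (norm_nonneg _) hR0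
    -- continuity in t
    have hFcont : ∀ x ∈ ball x₀ (δ/2), ContinuousOn (F x) (Icc (0:ℝ) 1) := by
      intro x hx
      apply continuousOn_finset_sum
      intro i _
      exact (((hfc i).comp (hccont x).continuousOn
        (fun t ht => hmemU x hx t ht)).mul continuousOn_const)
    have hF'cont : ContinuousOn (fun t => F' x₀ t) (Icc (0:ℝ) 1) := by
      apply continuousOn_finset_sum
      intro i _
      have hx₀b : x₀ ∈ ball x₀ (δ/2) := mem_ball_self (half_pos δpos)
      refine ContinuousOn.add ?_ ?_
      · exact ((hfc i).comp (hccont x₀).continuousOn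
          (fun t ht => hmemU x₀ hx₀b t ht)).smul continuousOn_const
      · exact continuousOn_const.fun_smul (continuousOn_id.fun_smul
          ((hdfc i).comp (hccont x₀).continuousOn (fun t ht => hmemU x₀ hx₀b t ht)))
    have hx₀b : x₀ ∈ ball x₀ (δ/2) := mem_ball_self (half_pos δpos)
    -- differentiation under the integral
    have key : HasFDerivAt (fun x => ∫ t in (0:ℝ)..1, F x t)
        (∫ t in (0:ℝ)..1, F' x₀ t) x₀ := by
      apply intervalIntegral.hasFDerivAt_integral_of_dominated_of_fderiv_le
        (bound := fun _ => C) (ball_mem_nhds x₀ (half_pos δpos))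
      · filter_upwards [ball_mem_nhds x₀ (half_pos δpos)] with x hx
        exact ((hFcont x hx).mono hsubI).aestronglyMeasurable measurableSet_uIoc
      · apply ContinuousOn.intervalIntegrable
        rw [uIcc_of_le zero_le_one]
        exact hFcont x₀ hx₀b
      · exact (hF'cont.mono hsubI).aestronglyMeasurable measurableSet_uIoc
      · exact Filter.Eventually.of_forall h_bound
      · exact intervalIntegrable_const
      · exact Filter.Eventually.of_forall h_diff
    -- identify the integral
    have hcurveU : ∀ t ∈ Icc (0:ℝ) 1, a + t • (x₀ - a) ∈ U := hseg x₀ hx₀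
    have hvdecomp : ∀ v : Fin n → ℝ, v = ∑ j, v j • (Pi.single j 1 : Fin n → ℝ) := by
      intro v
      ext k
      rw [Finset.sum_apply]
      simp [Pi.single_apply]
    have happly : ∀ (L : (Fin n → ℝ) →L[ℝ] ℝ) (v : Fin n → ℝ),
        L v = ∑ j, v j * L (Pi.single j 1) := by
      intro L v
      conv_lhs => rw [hvdecomp v]
      rw [map_sum]
      simp [smul_eq_mul]
    have hFeq : ∀ t ∈ Icc (0:ℝ) 1, F' x₀ t
        = ∑ j, (f j (a + t • (x₀ - a))
            + t * (fderiv ℝ (f j) (a + t • (x₀ - a))) (x₀ - a)) •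
          (ContinuousLinearMap.proj j : ((j : Fin n) → ℝ) →L[ℝ] ℝ) := by
      intro t ht
      have hctU := hcurveU t ht
      ext v
      simp only [hF'def, ContinuousLinearMap.coe_sum', Finset.sum_apply,
        ContinuousLinearMap.add_apply, ContinuousLinearMap.smul_apply,
        ContinuousLinearMap.proj_apply, smul_eq_mul]
      rw [Finset.sum_add_distrib]
      simp_rw [add_mul]
      rw [Finset.sum_add_distrib]
      congr 1
      -- ∑ i (x₀ i - a i) * (t * Dᵢ v) = ∑ j (t * Dⱼ (x₀ - a)) * v j
      have expand1 : ∀ i : Fin n, (fderiv ℝ (f i) (a + t • (x₀ - a))) v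
          = ∑ j, v j * (fderiv ℝ (f i) (a + t • (x₀ - a))) (Pi.single j 1) :=
        fun i => happly _ v
      have expand2 : ∀ j : Fin n, (fderiv ℝ (f j) (a + t • (x₀ - a))) (x₀ - a)
          = ∑ i, (x₀ i - a i) * (fderiv ℝ (f j) (a + t • (x₀ - a))) (Pi.single i 1) := by
        intro j
        rw [happly _ (x₀ - a)]
        exact Finset.sum_congr rfl fun i _ => by rw [Pi.sub_apply]
      calc ∑ i, (x₀ i - a i) * (t * (fderiv ℝ (f i) (a + t • (x₀ - a))) v)
          = ∑ i, ∑ j, (x₀ i - a i) *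
              (t * (v j * (fderiv ℝ (f i) (a + t • (x₀ - a))) (Pi.single j 1))) := by
            refine Finset.sum_congr rfl fun i _ => ?_
            rw [expand1 i, Finset.mul_sum, Finset.mul_sum]
        _ = ∑ j, ∑ i, (x₀ i - a i) *
              (t * (v j * (fderiv ℝ (f i) (a + t • (x₀ - a))) (Pi.single j 1))) :=
            Finset.sum_comm
        _ = ∑ j, t * (fderiv ℝ (f j) (a + t • (x₀ - a))) (x₀ - a) * v j := by
            refine Finset.sum_congr rfl fun j _ => ?_
            rw [expand2 j, Finset.mul_sum, Finset.sum_mul]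
            refine Finset.sum_congr rfl fun i _ => ?_
            rw [hclosed _ hctU i j]
            ring
    have hDcont : ∀ j, ContinuousOn
        (fun t : ℝ => fderiv ℝ (f j) (a + t • (x₀ - a))) (Icc (0:ℝ) 1) :=
      fun j => (hdfc j).comp (hccont x₀).continuousOn hcurveU
    have hfcont : ∀ j, ContinuousOn
        (fun t : ℝ => f j (a + t • (x₀ - a))) (Icc (0:ℝ) 1) :=
      fun j => (hfc j).comp (hccont x₀).continuousOn hcurveU
    have hscalar_int : ∀ j, IntervalIntegrable
        (fun t => f j (a + t • (x₀ - a))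
          + t * (fderiv ℝ (f j) (a + t • (x₀ - a))) (x₀ - a)) volume 0 1 := by
      intro j
      apply ContinuousOn.intervalIntegrable
      rw [uIcc_of_le zero_le_one]
      exact (hfcont j).add (continuousOn_id.mul ((hDcont j).clm_apply continuousOn_const))
    have hFTC : ∀ j, (∫ t in (0:ℝ)..1, (f j (a + t • (x₀ - a))
        + t * (fderiv ℝ (f j) (a + t • (x₀ - a))) (x₀ - a))) = f j x₀ := by
      intro j
      have hderiv : ∀ t ∈ uIcc (0:ℝ) 1, HasDerivAt (fun t => t * f j (a + t • (x₀ - a)))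
          (f j (a + t • (x₀ - a))
            + t * (fderiv ℝ (f j) (a + t • (x₀ - a))) (x₀ - a)) t := by
        intro t ht
        rw [uIcc_of_le zero_le_one] at ht
        have hcurve : HasDerivAt (fun t : ℝ => a + t • (x₀ - a)) (x₀ - a) t := by
          simpa using ((hasDerivAt_id t).smul_const (x₀ - a)).const_add a
        have hcomp := (hdf j _ (hcurveU t ht)).comp_hasDerivAt t hcurve
        have := (hasDerivAt_id t).fun_mul hcomp
        simpa using this
      rw [intervalIntegral.integral_eq_sub_of_hasDerivAt hderiv (hscalar_int j)]
      simp
    have hIeq : (∫ t in (0:ℝ)..1, F' x₀ t)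
        = ∑ i, f i x₀ • (ContinuousLinearMap.proj i : ((j : Fin n) → ℝ) →L[ℝ] ℝ) := by
      rw [intervalIntegral.integral_congr (g := fun t => ∑ j, (f j (a + t • (x₀ - a))
        + t * (fderiv ℝ (f j) (a + t • (x₀ - a))) (x₀ - a)) •
          (ContinuousLinearMap.proj j : ((j : Fin n) → ℝ) →L[ℝ] ℝ))
        (fun t ht => hFeq t (by rwa [uIcc_of_le zero_le_one] at ht))]
      have hsmul_int : ∀ j : Fin n, IntervalIntegrable (fun t =>
          (f j (a + t • (x₀ - a)) + t * (fderiv ℝ (f j) (a + t • (x₀ - a))) (x₀ - a)) •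
          (ContinuousLinearMap.proj j : ((j : Fin n) → ℝ) →L[ℝ] ℝ)) volume 0 1 := by
        intro j
        apply ContinuousOn.intervalIntegrable
        rw [uIcc_of_le zero_le_one]
        exact ((hfcont j).add (continuousOn_id.mul
          ((hDcont j).clm_apply continuousOn_const))).smul continuousOn_const
      rw [intervalIntegral.integral_finset_sum (fun j _ => hsmul_int j)]
      refine Finset.sum_congr rfl fun j _ => ?_
      rw [intervalIntegral.integral_smul_const, hFTC j]
    rw [← hIeq]
    exact key
  refine ⟨fun x => ∫ t in (0:ℝ)..1, F x t, ?_, fun x hx => main x hx⟩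
  have h21 : (2 : WithTop ℕ∞) = 1 + 1 := by norm_num
  rw [h21, contDiffOn_succ_iff_fderiv_of_isOpen hU]
  refine ⟨fun x hx => (main x hx).differentiableAt.differentiableWithinAt, ?_, ?_⟩
  · intro hω; exact absurd hω (by simp)
  · refine ContDiffOn.congr
      (f := fun x => ∑ i, f i x •
        (ContinuousLinearMap.proj i : ((j : Fin n) → ℝ) →L[ℝ] ℝ)) ?_ ?_
    · exact ContDiffOn.sum fun i _ => ((hf i).smul contDiffOn_const)
    · intro x hx
      exact (main x hx).fderiv
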